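/- arXiv:2105.09625 — 5 statements merged into one kernel-verified Lean document; each statement's English description precedes it below -/
import Mathlib

section
/- Let X = (X₁,…,X_p) be a random vector whose dependency structure follows a graph G on {1,…,p} (collections of coordinates indexed by non-adjacent vertex sets are independent), with all coordinates having finite fourth moments and mean zero. If i, j, k, l satisfy d_G(i,j) > 2 and d_G(k,l) > 2, then Cov(XᵢXⱼ, XₖXₗ) = E[XᵢXₖ]E[XⱼXₗ] + E[XᵢXₗ]E[XⱼXₖ]. -/
open MeasureTheory ProbabilityTheory Matrix Filter
open scoped BigOperators

noncomputable def specNorm {p : ℕ} (A : Matrix (Fin p) (Fin p) ℝ) : ℝ :=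
  ‖Matrix.toEuclideanCLM (𝕜 := ℝ) A‖

/-- Two vertex sets are adjacent if some `i ∈ I`, `j ∈ J` satisfy `i = j` or `i ~ j`. -/
def SetsAdj {V : Type*} (G : SimpleGraph V) (I J : Set V) : Prop :=
  ∃ i ∈ I, ∃ j ∈ J, i = j ∨ G.Adj i j

/-- The graph-dependent model: coordinates indexed by non-adjacent vertex sets are independent. -/
def GraphDependent {Ω : Type*} [MeasurableSpace Ω] (P : Measure Ω) {p : ℕ}
    (G : SimpleGraph (Fin p)) (X : Fin p → Ω → ℝ) : Prop :=
  ∀ I J : Set (Fin p), ¬ SetsAdj G I J →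
    IndepFun (fun ω (i : I) => X i ω) (fun ω (j : J) => X j ω) P

/-- `𝒱` is a d-dominating set for `G`. -/
def IsDomSet {p : ℕ} (G : SimpleGraph (Fin p)) (d : ℕ) (𝒱 : Set (Fin p)) : Prop :=
  (∀ u, u ∉ 𝒱 → ∃ v ∈ 𝒱, G.Adj u v) ∧
  ∀ u, {v ∈ 𝒱 | G.edist u v ≤ 3}.ncard ≤ d

/-- A centered Gaussian random vector with covariance matrix `S`:
every linear functional is centered Gaussian with the appropriate variance. -/
def IsCenteredGaussianVec {Ω : Type*} [MeasurableSpace Ω] (P : Measure Ω) {p : ℕ}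
    (z : Ω → Fin p → ℝ) (S : Matrix (Fin p) (Fin p) ℝ) : Prop :=
  ∀ a : Fin p → ℝ,
    Measure.map (fun ω => a ⬝ᵥ z ω) P = gaussianReal 0 (a ⬝ᵥ S.mulVec a).toNNReal


section Aux
open MeasureTheory ProbabilityTheory

/-- Two vertices are close if they are equal or adjacent. -/
def Close {V : Type*} (G : SimpleGraph V) (a b : V) : Prop := a = b ∨ G.Adj a b

lemma Close.symm {V : Type*} {G : SimpleGraph V} {a b : V} (h : Close G a b) : Close G b a := by
  rcases h with h | h
  · exact Or.inl h.symm
  · exact Or.inr h.symm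

lemma Close.edist_le_one {V : Type*} {G : SimpleGraph V} {a b : V} (h : Close G a b) :
    G.edist a b ≤ 1 := by
  rcases h with h | h
  · simp [h]
  · exact le_of_eq (SimpleGraph.edist_eq_one_iff_adj.2 h)

lemma not_close_of_far {V : Type*} {G : SimpleGraph V} {a b : V} (h : 2 < G.edist a b) :
    ¬ Close G a b := fun hc => by
  have := h.trans_le hc.edist_le_one
  norm_num at this

lemma not_close_trans {V : Type*} {G : SimpleGraph V} {a b c : V} (hab : 2 < G.edist a b)
    (hac : Close G a c) : ¬ Close G c b := fun hcb => by
  have h2 : G.edist a b ≤ 2 := by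
    calc G.edist a b ≤ G.edist a c + G.edist c b := G.edist_triangle
    _ ≤ 1 + 1 := add_le_add hac.edist_le_one hcb.edist_le_one
    _ = 2 := by norm_num

  exact absurd hab (not_lt.2 h2)

lemma indep_single {Ω : Type*} [MeasurableSpace Ω] {P : Measure Ω} {p : ℕ}
    {G : SimpleGraph (Fin p)} {X : Fin p → Ω → ℝ} (hdep : GraphDependent P G X)
    {a b : Fin p} (hab : ¬ Close G a b) : IndepFun (X a) (X b) P := by
  have hAdj : ¬ SetsAdj G {a} {b} := by
    rintro ⟨x, hx, y, hy, hxy⟩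
    rw [Set.mem_singleton_iff] at hx hy
    subst hx; subst hy
    exact hab hxy
  have h := (hdep {a} {b} hAdj).comp
    (φ := fun v : ({a} : Set (Fin p)) → ℝ => v ⟨a, rfl⟩)
    (ψ := fun v : ({b} : Set (Fin p)) → ℝ => v ⟨b, rfl⟩) (_mγ := inferInstance) (_mγ' := inferInstance)
    (measurable_pi_apply _) (measurable_pi_apply _)
  exact h

lemma indep_pair {Ω : Type*} [MeasurableSpace Ω] {P : Measure Ω} {p : ℕ}
    {G : SimpleGraph (Fin p)} {X : Fin p → Ω → ℝ} (hdep : GraphDependent P G X)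
    {a b c d : Fin p} (hac : ¬ Close G a c) (had : ¬ Close G a d)
    (hbc : ¬ Close G b c) (hbd : ¬ Close G b d) :
    IndepFun (fun ω => X a ω * X b ω) (fun ω => X c ω * X d ω) P := by
  have hAdj : ¬ SetsAdj G {a, b} {c, d} := by
    rintro ⟨x, hx, y, hy, hxy⟩
    rcases hx with hx | hx <;> rcases hy with hy | hy <;>
      (try rw [Set.mem_singleton_iff] at hx) <;>
      (try rw [Set.mem_singleton_iff] at hy) <;> subst hx <;> subst hy
    · exact hac hxy
    · exact had hxy
    · exact hbc hxy
    · exact hbd hxy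
  have h := (hdep {a, b} {c, d} hAdj).comp
    (φ := fun v : ({a, b} : Set (Fin p)) → ℝ =>
      v ⟨a, Or.inl rfl⟩ * v ⟨b, Or.inr rfl⟩)
    (ψ := fun v : ({c, d} : Set (Fin p)) → ℝ =>
      v ⟨c, Or.inl rfl⟩ * v ⟨d, Or.inr rfl⟩) (_mγ := inferInstance) (_mγ' := inferInstance)
    ((measurable_pi_apply (⟨a, Or.inl rfl⟩ : ({a, b} : Set (Fin p)))).mul
      (measurable_pi_apply (⟨b, Or.inr rfl⟩ : ({a, b} : Set (Fin p)))))
    ((measurable_pi_apply (⟨c, Or.inl rfl⟩ : ({c, d} : Set (Fin p)))).mul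
      (measurable_pi_apply (⟨d, Or.inr rfl⟩ : ({c, d} : Set (Fin p)))))
  exact h

end Aux

theorem stmt5 {Ω : Type*} [MeasurableSpace Ω] (P : Measure Ω) [IsProbabilityMeasure P]
    {p : ℕ} (G : SimpleGraph (Fin p)) (X : Fin p → Ω → ℝ)
    (hdep : GraphDependent P G X)
    (hmeas : ∀ i, Measurable (X i))
    (h4 : ∀ i, MemLp (X i) 4 P)
    (h0 : ∀ i, ∫ ω, X i ω ∂P = 0)
    (i j k l : Fin p) (hij : 2 < G.edist i j) (hkl : 2 < G.edist k l) :
    ∫ ω, (X i ω * X j ω) * (X k ω * X l ω) ∂P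
        - (∫ ω, X i ω * X j ω ∂P) * ∫ ω, X k ω * X l ω ∂P
      = (∫ ω, X i ω * X k ω ∂P) * (∫ ω, X j ω * X l ω ∂P)
        + (∫ ω, X i ω * X l ω ∂P) * (∫ ω, X j ω * X k ω ∂P) := by
  classical
  have asm : ∀ a b : Fin p, AEStronglyMeasurable (X a * X b) P :=
    fun a b => ((hmeas a).mul (hmeas b)).aestronglyMeasurable
  have asm1 : ∀ a : Fin p, AEStronglyMeasurable (X a) P :=
    fun a => (hmeas a).aestronglyMeasurable
  have zint : ∀ a b : Fin p, ¬ Close G a b → (∫ ω, X a ω * X b ω ∂P) = 0 := by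
    intro a b hab
    rw [IndepFun.integral_fun_mul_eq_mul_integral (indep_single hdep hab) (asm1 a) (asm1 b), h0 a, zero_mul]
  have hijc : ¬ Close G i j := not_close_of_far hij
  have hklc : ¬ Close G k l := not_close_of_far hkl
  rw [zint i j hijc, zint k l hklc, zero_mul, sub_zero]
  by_cases hcase : Close G i l ∨ Close G k j
  · -- use pairing {i,l} vs {j,k}
    have hik : ¬ Close G i k := by
      intro h
      rcases hcase with hc | hc
      · exact not_close_trans hkl h.symm hc
      · exact not_close_trans hij h hc
    have hlj : ¬ Close G l j := by
      intro h
      rcases hcase with hc | hc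
      · exact not_close_trans hij hc h
      · exact not_close_trans hkl hc h.symm
    have hlk : ¬ Close G l k := fun h => hklc h.symm
    have hindep := indep_pair hdep hijc hik hlj hlk
    have hre : ∀ ω, (X i ω * X j ω) * (X k ω * X l ω) = (X i ω * X l ω) * (X j ω * X k ω) := by
      intro ω; ring
    simp only [hre]
    rw [IndepFun.integral_fun_mul_eq_mul_integral hindep (asm i l) (asm j k), zint i k hik, zero_mul, zero_add]
  · push_neg at hcase
    obtain ⟨hil, hkj⟩ := hcase
    have hindep := indep_pair hdep hijc hil hkj hklc
    have hre : ∀ ω, (X i ω * X j ω) * (X k ω * X l ω) = (X i ω * X k ω) * (X j ω * X l ω) := by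
      intro ω; ring
    simp only [hre]
    rw [IndepFun.integral_fun_mul_eq_mul_integral hindep (asm i k) (asm j l), zint i l hil, zero_mul, add_zero]
end

section
/- Let X = (X₁,…,X_p) be a mean-zero random vector with covariance matrix Σ following the graph-dependent model with graph G. If A = (a_{ij}) ∈ ℝ^{p×p} is symmetric and a_{ij} = 0 whenever d_G(i,j) ≤ 2, then Var(XᵀAX) ≤ 2‖A‖²·tr(Σ²). -/
open MeasureTheory ProbabilityTheory Matrix Filter
open scoped BigOperators ENNReal

/-! ### Auxiliary lemmas -/

set_option maxHeartbeats 1000000 in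
lemma specNorm_mulVec_sq_sum_le {p : ℕ} (A : Matrix (Fin p) (Fin p) ℝ) (v : Fin p → ℝ) :
    ∑ i, (A.mulVec v i) ^ 2 ≤ specNorm A ^ 2 * ∑ i, (v i) ^ 2 := by
  have hn : ∀ w : Fin p → ℝ,
      ‖(WithLp.equiv 2 (Fin p → ℝ)).symm w‖ = Real.sqrt (∑ i, (w i) ^ 2) := by
    intro w
    rw [EuclideanSpace.norm_eq]
    congr 1
    refine Finset.sum_congr rfl fun i _ => ?_
    simp [WithLp.equiv_symm_apply, Real.norm_eq_abs, sq_abs]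
  have h := (Matrix.toEuclideanCLM (𝕜 := ℝ) A).le_opNorm ((WithLp.equiv 2 (Fin p → ℝ)).symm v)
  rw [show Matrix.toEuclideanCLM (𝕜 := ℝ) A ((WithLp.equiv 2 (Fin p → ℝ)).symm v)
      = (WithLp.equiv 2 (Fin p → ℝ)).symm (Matrix.toLin' A v) from rfl, hn, hn] at h
  have h2 := pow_le_pow_left₀ (Real.sqrt_nonneg _) h 2
  rw [Real.sq_sqrt (Finset.sum_nonneg fun i _ => sq_nonneg _), mul_pow,
    Real.sq_sqrt (Finset.sum_nonneg fun i _ => sq_nonneg _)] at h2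
  rw [Matrix.toLin'_apply] at h2
  exact h2

lemma sum_mul_transpose_le {p : ℕ} (B : Matrix (Fin p) (Fin p) ℝ) :
    ∑ z : Fin p × Fin p, B z.1 z.2 * B z.2 z.1 ≤ ∑ z : Fin p × Fin p, B z.1 z.2 ^ 2 := by
  have h := Finset.sum_mul_sq_le_sq_mul_sq Finset.univ
    (fun z : Fin p × Fin p => B z.1 z.2) (fun z => B z.2 z.1)
  have he : ∑ z : Fin p × Fin p, B z.2 z.1 ^ 2 = ∑ z : Fin p × Fin p, B z.1 z.2 ^ 2 :=
    Fintype.sum_equiv (Equiv.prodComm _ _) _ _ (fun z => rfl)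
  rw [he] at h
  have hb : (0:ℝ) ≤ ∑ z : Fin p × Fin p, B z.1 z.2 ^ 2 :=
    Finset.sum_nonneg fun z _ => sq_nonneg _
  nlinarith [h, hb]

lemma quad_sum_eq {p : ℕ} (A S : Matrix (Fin p) (Fin p) ℝ)
    (hA : A.IsSymm) (hs : ∀ i j, S i j = S j i) :
    ∑ q : Fin p × Fin p, ∑ r : Fin p × Fin p,
        A q.1 q.2 * A r.1 r.2 * (S q.1 r.1 * S q.2 r.2 + S q.1 r.2 * S q.2 r.1)
      = 2 * ∑ z : Fin p × Fin p, (A * S) z.1 z.2 * (A * S) z.2 z.1 := by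
  classical
  set Z := (Fin p × Fin p) × (Fin p × Fin p)
  -- the common target shape
  set G : Z → ℝ := fun z => (A z.1.1 z.2.1 * S z.2.1 z.1.2) * (A z.1.2 z.2.2 * S z.2.2 z.1.1)
    with hGdef
  have hRHS : ∑ z : Fin p × Fin p, (A * S) z.1 z.2 * (A * S) z.2 z.1 = ∑ z : Z, G z := by
    have hpt : ∀ a : Fin p × Fin p, (A * S) a.1 a.2 * (A * S) a.2 a.1
        = ∑ b : Fin p × Fin p, (A a.1 b.1 * S b.1 a.2) * (A a.2 b.2 * S b.2 a.1) := by
      intro a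
      rw [Matrix.mul_apply, Matrix.mul_apply, Finset.sum_mul_sum,
        ← Fintype.sum_prod_type']
    simp_rw [hpt]
    rw [← Fintype.sum_prod_type']
  have h1 : ∑ q : Fin p × Fin p, ∑ r : Fin p × Fin p,
      A q.1 q.2 * A r.1 r.2 * (S q.1 r.1 * S q.2 r.2) = ∑ z : Z, G z := by
    rw [← Fintype.sum_prod_type']
    refine Fintype.sum_equiv
      ⟨fun z => ((z.1.1, z.2.2), (z.1.2, z.2.1)),
       fun z => ((z.1.1, z.2.1), (z.2.2, z.1.2)),
       by rintro ⟨⟨i, j⟩, ⟨k, l⟩⟩; rfl, by rintro ⟨⟨i, j⟩, ⟨k, l⟩⟩; rfl⟩ _ _ ?_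
    rintro ⟨⟨i, j⟩, ⟨k, l⟩⟩
    simp only [hGdef, Equiv.coe_fn_mk]
    rw [hA.apply k l, hs k i]
    ring
  have h2 : ∑ q : Fin p × Fin p, ∑ r : Fin p × Fin p,
      A q.1 q.2 * A r.1 r.2 * (S q.1 r.2 * S q.2 r.1) = ∑ z : Z, G z := by
    rw [← Fintype.sum_prod_type']
    refine Fintype.sum_equiv
      ⟨fun z => ((z.1.1, z.2.1), (z.1.2, z.2.2)),
       fun z => ((z.1.1, z.2.1), (z.1.2, z.2.2)),
       by rintro ⟨⟨i, j⟩, ⟨k, l⟩⟩; rfl, by rintro ⟨⟨i, j⟩, ⟨k, l⟩⟩; rfl⟩ _ _ ?_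
    rintro ⟨⟨i, j⟩, ⟨k, l⟩⟩
    simp only [hGdef, Equiv.coe_fn_mk]
    rw [hs l i]
    ring
  calc ∑ q : Fin p × Fin p, ∑ r : Fin p × Fin p,
        A q.1 q.2 * A r.1 r.2 * (S q.1 r.1 * S q.2 r.2 + S q.1 r.2 * S q.2 r.1)
      = (∑ q : Fin p × Fin p, ∑ r : Fin p × Fin p,
          A q.1 q.2 * A r.1 r.2 * (S q.1 r.1 * S q.2 r.2))
        + ∑ q : Fin p × Fin p, ∑ r : Fin p × Fin p,
          A q.1 q.2 * A r.1 r.2 * (S q.1 r.2 * S q.2 r.1) := by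
        rw [← Finset.sum_add_distrib]
        refine Finset.sum_congr rfl fun q _ => ?_
        rw [← Finset.sum_add_distrib]
        refine Finset.sum_congr rfl fun r _ => ?_
        ring
    _ = 2 * ∑ z : Fin p × Fin p, (A * S) z.1 z.2 * (A * S) z.2 z.1 := by
        rw [h1, h2, hRHS]; ring

theorem stmt6 {Ω : Type*} [MeasurableSpace Ω] (P : Measure Ω) [IsProbabilityMeasure P]
    {p : ℕ} (G : SimpleGraph (Fin p)) (X : Fin p → Ω → ℝ)
    (hdep : GraphDependent P G X)
    (hmeas : ∀ i, Measurable (X i))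
    (h4 : ∀ i, MemLp (X i) 4 P)
    (h0 : ∀ i, ∫ ω, X i ω ∂P = 0)
    (S A : Matrix (Fin p) (Fin p) ℝ)
    (hS : ∀ i j, S i j = ∫ ω, X i ω * X j ω ∂P)
    (hA : A.IsSymm)
    (hA0 : ∀ i j, G.edist i j ≤ 2 → A i j = 0) :
    variance (fun ω => (fun i => X i ω) ⬝ᵥ A.mulVec (fun i => X i ω)) P
      ≤ 2 * specNorm A ^ 2 * Matrix.trace (S ^ 2) := by
  classical
  -- graph distance helpers
  have far_of_not2 : ∀ {u v : Fin p}, ¬ G.edist u v ≤ 2 → ¬ G.edist u v ≤ 1 :=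
    fun h h1 => h (h1.trans one_le_two)
  have close_edist : ∀ {u v : Fin p}, (u = v ∨ G.Adj u v) → G.edist u v ≤ 1 := by
    rintro u v (rfl | h)
    · simp [SimpleGraph.edist_self]
    · rw [SimpleGraph.edist_eq_one_iff_adj.mpr h]
  have notadj : ∀ (I J : Set (Fin p)),
      (∀ a ∈ I, ∀ b ∈ J, ¬ G.edist a b ≤ 1) → ¬ SetsAdj G I J := by
    rintro I J h ⟨a, ha, b, hb, hab⟩
    exact h a ha b hb (close_edist hab)
  have tri : ∀ {u v w : Fin p}, G.edist u v ≤ 1 → G.edist v w ≤ 1 → G.edist u w ≤ 2 := by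
    intro u v w hu hv
    exact le_trans (G.edist_triangle (v := v))
      ((add_le_add hu hv).trans_eq one_add_one_eq_two)
  have symm1 : ∀ {u v : Fin p}, G.edist u v ≤ 1 → G.edist v u ≤ 1 := by
    intro u v h; rwa [SimpleGraph.edist_comm] at h
  -- integrability helpers
  have h2 : ∀ i, MemLp (X i) 2 P := fun i =>
    (h4 i).mono_exponent (by norm_num)
  have h1 : ∀ i, Integrable (X i) P := fun i =>
    memLp_one_iff_integrable.mp ((h4 i).mono_exponent (by norm_num))
  have hmul2 : ∀ i j, MemLp (fun ω => X i ω * X j ω) 2 P := by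
    intro i j
    have h := MemLp.smul (𝕜 := ℝ) (h4 j) (h4 i) (p := 4) (q := 4) (r := 2)
      (hpqr := ⟨by simp only [← one_div]; rw [ENNReal.div_add_div_same, ENNReal.div_eq_div_iff] <;> norm_num⟩)
    exact h
  have hint2 : ∀ {f g : Ω → ℝ}, MemLp f 2 P → MemLp g 2 P →
      Integrable (fun ω => f ω * g ω) P := by
    intro f g hf hg
    have h := MemLp.smul (𝕜 := ℝ) hg hf (p := 2) (q := 2) (r := 1)
      (hpqr := ⟨by rw [ENNReal.inv_two_add_inv_two, inv_one]⟩)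
    exact memLp_one_iff_integrable.mp h
  -- independence helpers
  have ind1 : ∀ u v : Fin p, ¬ G.edist u v ≤ 1 → IndepFun (X u) (X v) P := by
    intro u v h
    have hna : ¬ SetsAdj G {u} {v} := notadj _ _ (by
      intro a ha b hb
      rw [Set.mem_singleton_iff] at ha hb
      subst ha; subst hb; exact h)
    exact (hdep _ _ hna).comp
      (φ := fun f : ({u} : Set (Fin p)) → ℝ => f ⟨u, rfl⟩)
      (ψ := fun f : ({v} : Set (Fin p)) → ℝ => f ⟨v, rfl⟩)
      (measurable_pi_apply _) (measurable_pi_apply _)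
  have ind2 : ∀ a b c d : Fin p, ¬ G.edist a c ≤ 1 → ¬ G.edist a d ≤ 1 →
      ¬ G.edist b c ≤ 1 → ¬ G.edist b d ≤ 1 →
      IndepFun (fun ω => X a ω * X b ω) (fun ω => X c ω * X d ω) P := by
    intro a b c d hac had hbc hbd
    have hna : ¬ SetsAdj G {a, b} {c, d} := notadj _ _ (by
      intro x hx y hy
      simp only [Set.mem_insert_iff, Set.mem_singleton_iff] at hx hy
      rcases hx with rfl | rfl <;> rcases hy with rfl | rfl <;> assumption)
    have hφ : Measurable (fun f : ({a, b} : Set (Fin p)) → ℝ =>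
        f ⟨a, by simp⟩ * f ⟨b, by simp⟩) :=
      (measurable_pi_apply _).mul (measurable_pi_apply _)
    have hψ : Measurable (fun f : ({c, d} : Set (Fin p)) → ℝ =>
        f ⟨c, by simp⟩ * f ⟨d, by simp⟩) :=
      (measurable_pi_apply _).mul (measurable_pi_apply _)
    exact (hdep _ _ hna).comp hφ hψ
  have ind3 : ∀ a b c d : Fin p, ¬ G.edist a b ≤ 1 → ¬ G.edist a c ≤ 1 →
      ¬ G.edist a d ≤ 1 →
      IndepFun (X a) (fun ω => X b ω * X c ω * X d ω) P := by
    intro a b c d hab hac had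
    have hna : ¬ SetsAdj G {a} ({b, c, d} : Set (Fin p)) := notadj _ _ (by
      intro x hx y hy
      rw [Set.mem_singleton_iff] at hx
      simp only [Set.mem_insert_iff, Set.mem_singleton_iff] at hy
      subst hx
      rcases hy with rfl | rfl | rfl <;> assumption)
    have hφ : Measurable (fun f : ({a} : Set (Fin p)) → ℝ => f ⟨a, rfl⟩) :=
      measurable_pi_apply _
    have hψ : Measurable (fun f : ({b, c, d} : Set (Fin p)) → ℝ =>
        f ⟨b, by simp⟩ * f ⟨c, by simp⟩ * f ⟨d, by simp⟩) := by
      apply Measurable.mul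
      · apply Measurable.mul <;> apply measurable_pi_apply
      · apply measurable_pi_apply
    exact (hdep _ _ hna).comp hφ hψ
  -- vanishing covariances
  have Szero : ∀ u v : Fin p, ¬ G.edist u v ≤ 1 → S u v = 0 := by
    intro u v h
    rw [hS]
    have hval : ∫ ω, X u ω * X v ω ∂P = (∫ ω, X u ω ∂P) * ∫ ω, X v ω ∂P :=
      (ind1 u v h).integral_fun_mul_eq_mul_integral (h1 u).1 (h1 v).1
    rw [hval, h0 u, zero_mul]
  have hSsymm : ∀ i j, S i j = S j i := by
    intro i j
    rw [hS, hS]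
    simp_rw [mul_comm]
  have hAnz : ∀ {u v : Fin p}, A u v ≠ 0 → ¬ G.edist u v ≤ 2 := fun h hle => h (hA0 _ _ hle)
  have int3 : ∀ b c d : Fin p, Integrable (fun ω => X b ω * X c ω * X d ω) P :=
    fun b c d => hint2 (hmul2 b c) (h2 d)
  have triple_zero : ∀ a b c d : Fin p, ¬ G.edist a b ≤ 1 → ¬ G.edist a c ≤ 1 →
      ¬ G.edist a d ≤ 1 → ∫ ω, X a ω * (X b ω * X c ω * X d ω) ∂P = 0 := by
    intro a b c d hab hac had
    have hval : ∫ ω, X a ω * (X b ω * X c ω * X d ω) ∂P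
        = (∫ ω, X a ω ∂P) * ∫ ω, X b ω * X c ω * X d ω ∂P :=
      (ind3 a b c d hab hac had).integral_fun_mul_eq_mul_integral (h1 a).1 (int3 b c d).1
    rw [hval, h0 a, zero_mul]
  -- the fourth moment identity
  have moment4 : ∀ i j k l : Fin p, ¬ G.edist i j ≤ 2 → ¬ G.edist k l ≤ 2 →
      ∫ ω, X i ω * X j ω * (X k ω * X l ω) ∂P = S i k * S j l + S i l * S j k := by
    intro i j k l hij hkl
    have hij1 : ¬ G.edist i j ≤ 1 := far_of_not2 hij
    have hkl1 : ¬ G.edist k l ≤ 1 := far_of_not2 hkl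
    have hji : ¬ G.edist j i ≤ 1 := fun h => hij1 (symm1 h)
    by_cases hik : G.edist i k ≤ 1
    · have hil : ¬ G.edist i l ≤ 1 := fun h => hkl (tri (symm1 hik) h)
      have hjk : ¬ G.edist j k ≤ 1 := fun h => hij (tri hik (symm1 h))
      by_cases hjl : G.edist j l ≤ 1
      · have hkj : ¬ G.edist k j ≤ 1 := fun h => hjk (symm1 h)
        have harr : ∫ ω, X i ω * X j ω * (X k ω * X l ω) ∂P
            = ∫ ω, (X i ω * X k ω) * (X j ω * X l ω) ∂P := by
          refine integral_congr_ae (Filter.Eventually.of_forall fun ω => by ring)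
        have hval : ∫ ω, (X i ω * X k ω) * (X j ω * X l ω) ∂P
            = (∫ ω, X i ω * X k ω ∂P) * ∫ ω, X j ω * X l ω ∂P :=
          (ind2 i k j l hij1 hil hkj hkl1).integral_fun_mul_eq_mul_integral
            (hint2 (h2 i) (h2 k)).1 (hint2 (h2 j) (h2 l)).1
        rw [harr, hval, ← hS i k, ← hS j l, Szero i l hil, zero_mul, add_zero]
      · have harr : ∫ ω, X i ω * X j ω * (X k ω * X l ω) ∂P
            = ∫ ω, X j ω * (X i ω * X k ω * X l ω) ∂P := by
          refine integral_congr_ae (Filter.Eventually.of_forall fun ω => by ring)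
        rw [harr, triple_zero j i k l hji hjk hjl, Szero j l hjl, Szero j k hjk,
          mul_zero, mul_zero, add_zero]
    · by_cases hil : G.edist i l ≤ 1
      · have hjl : ¬ G.edist j l ≤ 1 := fun h => hij (tri hil (symm1 h))
        by_cases hjk : G.edist j k ≤ 1
        · have hlj : ¬ G.edist l j ≤ 1 := fun h => hjl (symm1 h)
          have hlk : ¬ G.edist l k ≤ 1 := fun h => hkl1 (symm1 h)
          have harr : ∫ ω, X i ω * X j ω * (X k ω * X l ω) ∂P
              = ∫ ω, (X i ω * X l ω) * (X j ω * X k ω) ∂P := by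
            refine integral_congr_ae (Filter.Eventually.of_forall fun ω => by ring)
          have hval : ∫ ω, (X i ω * X l ω) * (X j ω * X k ω) ∂P
              = (∫ ω, X i ω * X l ω ∂P) * ∫ ω, X j ω * X k ω ∂P :=
            (ind2 i l j k hij1 hik hlj hlk).integral_fun_mul_eq_mul_integral
              (hint2 (h2 i) (h2 l)).1 (hint2 (h2 j) (h2 k)).1
          rw [harr, hval, ← hS i l, ← hS j k, Szero i k hik, zero_mul, zero_add]
        · have harr : ∫ ω, X i ω * X j ω * (X k ω * X l ω) ∂P
              = ∫ ω, X j ω * (X i ω * X k ω * X l ω) ∂P := by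
            refine integral_congr_ae (Filter.Eventually.of_forall fun ω => by ring)
          rw [harr, triple_zero j i k l hji hjk hjl, Szero j l hjl, Szero j k hjk,
            mul_zero, mul_zero, add_zero]
      · have harr : ∫ ω, X i ω * X j ω * (X k ω * X l ω) ∂P
            = ∫ ω, X i ω * (X j ω * X k ω * X l ω) ∂P := by
          refine integral_congr_ae (Filter.Eventually.of_forall fun ω => by ring)
        rw [harr, triple_zero i j k l hij1 hik hil, Szero i k hik, Szero i l hil,
          zero_mul, zero_mul, add_zero]
  -- rewrite the quadratic form
  have hFeq : (fun ω => (fun i => X i ω) ⬝ᵥ A.mulVec fun i => X i ω)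
      = fun ω => ∑ q : Fin p × Fin p, A q.1 q.2 * (X q.1 ω * X q.2 ω) := by
    funext ω
    rw [Fintype.sum_prod_type' (fun i j => A i j * (X i ω * X j ω))]
    simp only [dotProduct, Matrix.mulVec, Finset.mul_sum]
    exact Finset.sum_congr rfl fun i _ => Finset.sum_congr rfl fun j _ => by ring
  have hQ2 : MemLp (fun ω => ∑ q : Fin p × Fin p, A q.1 q.2 * (X q.1 ω * X q.2 ω)) 2 P :=
    memLp_finsetSum _ (fun q _ => (hmul2 q.1 q.2).const_mul _)
  have hintQterm : ∀ q : Fin p × Fin p,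
      Integrable (fun ω => A q.1 q.2 * (X q.1 ω * X q.2 ω)) P :=
    fun q => (hint2 (h2 q.1) (h2 q.2)).const_mul _
  have hEQ : ∫ ω, (∑ q : Fin p × Fin p, A q.1 q.2 * (X q.1 ω * X q.2 ω)) ∂P = 0 := by
    rw [integral_finset_sum _ (fun q _ => hintQterm q)]
    refine Finset.sum_eq_zero fun q _ => ?_
    rw [integral_const_mul]
    by_cases hq : A q.1 q.2 = 0
    · rw [hq, zero_mul]
    · rw [← hS, Szero _ _ (far_of_not2 (hAnz hq)), mul_zero]
  have key : ∫ ω, (∑ q : Fin p × Fin p, A q.1 q.2 * (X q.1 ω * X q.2 ω)) ^ 2 ∂P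
      = ∑ q : Fin p × Fin p, ∑ r : Fin p × Fin p,
          A q.1 q.2 * A r.1 r.2 * (S q.1 r.1 * S q.2 r.2 + S q.1 r.2 * S q.2 r.1) := by
    have hsq : ∀ ω, (∑ q : Fin p × Fin p, A q.1 q.2 * (X q.1 ω * X q.2 ω)) ^ 2
        = ∑ q : Fin p × Fin p, ∑ r : Fin p × Fin p,
            A q.1 q.2 * A r.1 r.2 * (X q.1 ω * X q.2 ω * (X r.1 ω * X r.2 ω)) := by
      intro ω
      rw [sq, Finset.sum_mul_sum]
      exact Finset.sum_congr rfl fun q _ => Finset.sum_congr rfl fun r _ => by ring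
    simp_rw [hsq]
    rw [integral_finset_sum _ (fun q _ => integrable_finset_sum _
      (fun r _ => (hint2 (hmul2 q.1 q.2) (hmul2 r.1 r.2)).const_mul _))]
    refine Finset.sum_congr rfl fun q _ => ?_
    rw [integral_finset_sum _ (fun r _ =>
      (hint2 (hmul2 q.1 q.2) (hmul2 r.1 r.2)).const_mul _)]
    refine Finset.sum_congr rfl fun r _ => ?_
    rw [integral_const_mul]
    by_cases hq : A q.1 q.2 * A r.1 r.2 = 0
    · rw [hq, zero_mul, zero_mul]
    · rw [moment4 _ _ _ _ (hAnz (left_ne_zero_of_mul hq)) (hAnz (right_ne_zero_of_mul hq))]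
  -- trace identity
  have htr : Matrix.trace (S ^ 2) = ∑ z : Fin p × Fin p, S z.1 z.2 ^ 2 := by
    have : Matrix.trace (S ^ 2) = ∑ i, ∑ j, S i j * S j i := by
      rw [pow_two]
      simp [Matrix.trace, Matrix.diag, Matrix.mul_apply]
    rw [this, ← Fintype.sum_prod_type']
    refine Finset.sum_congr rfl fun z _ => ?_
    rw [hSsymm z.2 z.1, sq]
  -- the spectral norm bound
  have hbound : ∑ z : Fin p × Fin p, (A * S) z.1 z.2 * (A * S) z.2 z.1
      ≤ specNorm A ^ 2 * ∑ z : Fin p × Fin p, S z.1 z.2 ^ 2 := by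
    refine le_trans (sum_mul_transpose_le (A * S)) ?_
    have hcol : ∀ j, ∑ i, ((A * S) i j) ^ 2 ≤ specNorm A ^ 2 * ∑ i, (S i j) ^ 2 := by
      intro j
      have hms : ∀ i, (A * S) i j = A.mulVec (fun x => S x j) i := by
        intro i
        rw [Matrix.mul_apply]
        rfl
      simp_rw [hms]
      exact specNorm_mulVec_sq_sum_le A _
    calc ∑ z : Fin p × Fin p, (A * S) z.1 z.2 ^ 2
        = ∑ j, ∑ i, ((A * S) i j) ^ 2 := by
          rw [Fintype.sum_prod_type' (fun i j => (A * S) i j ^ 2)]; exact Finset.sum_comm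
      _ ≤ ∑ j, specNorm A ^ 2 * ∑ i, (S i j) ^ 2 := Finset.sum_le_sum fun j _ => hcol j
      _ = specNorm A ^ 2 * ∑ j, ∑ i, (S i j) ^ 2 := by rw [Finset.mul_sum]
      _ = specNorm A ^ 2 * ∑ z : Fin p × Fin p, S z.1 z.2 ^ 2 := by
          congr 1
          rw [Fintype.sum_prod_type' (fun i j => S i j ^ 2)]
          exact Finset.sum_comm
  -- put everything together
  rw [hFeq, variance_eq_sub hQ2]
  simp only [Pi.pow_apply]
  rw [key, hEQ, quad_sum_eq A S hA hSsymm, htr, mul_assoc]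
  have h2b := mul_le_mul_of_nonneg_left hbound (by norm_num : (0:ℝ) ≤ 2)
  have h00 : (0:ℝ) ^ 2 = 0 := by norm_num
  rw [h00, sub_zero]
  exact h2b
end

section
/- Let X = (X₁,…,X_p) be a mean-zero random vector with covariance Σ following the graph-dependent model with graph G of maximum degree Δ. Then tr(Σ²) ≤ (Δ+1)·∑_{i=1}^p E[Xᵢ⁴]. -/
open MeasureTheory ProbabilityTheory Matrix Filter
open scoped BigOperators ENNReal

theorem stmt7 {Ω : Type*} [MeasurableSpace Ω] (P : Measure Ω) [IsProbabilityMeasure P]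
    {p : ℕ} (G : SimpleGraph (Fin p)) [DecidableRel G.Adj] (X : Fin p → Ω → ℝ)
    (hdep : GraphDependent P G X)
    (hmeas : ∀ i, Measurable (X i))
    (h4 : ∀ i, MemLp (X i) 4 P)
    (h0 : ∀ i, ∫ ω, X i ω ∂P = 0)
    (S : Matrix (Fin p) (Fin p) ℝ)
    (hS : ∀ i j, S i j = ∫ ω, X i ω * X j ω ∂P)
    (Δ : ℕ) (hΔ : ∀ v, G.degree v ≤ Δ) :
    Matrix.trace (S ^ 2) ≤ ((Δ : ℝ) + 1) * ∑ i, ∫ ω, X i ω ^ 4 ∂P := by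
  classical
  set q : Fin p → ℝ := fun i => ∫ ω, X i ω ^ 4 ∂P with hqdef
  set m : Fin p → ℝ := fun i => ∫ ω, X i ω ^ 2 ∂P with hmdef
  have hL2 : ∀ i, MemLp (X i) 2 P := fun i =>
    (h4 i).mono_exponent (by norm_num)
  have hsqL2 : ∀ i, MemLp (fun ω => X i ω ^ 2) 2 P := by
    intro i
    rw [memLp_two_iff_integrable_sq ((hmeas i).pow_const 2).aestronglyMeasurable]
    have h := (h4 i).integrable_norm_rpow (by norm_num) (by norm_num)
    have heq : (fun ω => ‖X i ω‖ ^ (4:ℝ≥0∞).toReal) = fun ω => (X i ω ^ 2) ^ 2 := by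
      funext ω
      rw [show (4:ℝ≥0∞).toReal = ((4:ℕ):ℝ) by norm_num, Real.rpow_natCast, ← pow_mul,
        Real.norm_eq_abs, ← abs_pow, abs_of_nonneg (by positivity)]
    rwa [heq] at h
  have hq0 : ∀ i, 0 ≤ q i := fun i => integral_nonneg fun ω => by positivity
  have hm0 : ∀ i, 0 ≤ m i := fun i => integral_nonneg fun ω => by positivity
  have hjensen : ∀ i, m i ^ 2 ≤ q i := by
    intro i
    have h1 := variance_nonneg (fun ω => X i ω ^ 2) P
    rw [variance_eq_sub (hsqL2 i)] at h1
    have h2 : ∫ ω, ((fun ω => X i ω ^ 2) ^ 2) ω ∂P = q i := by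
      simp only [Pi.pow_apply, ← pow_mul, hqdef]
    rw [h2] at h1
    show (∫ ω, X i ω ^ 2 ∂P) ^ 2 ≤ q i
    linarith
  have hgint : ∀ i j, Integrable (fun ω => (X i ω ^ 2 + X j ω ^ 2) / 2) P := fun i j =>
    ((hL2 i).integrable_sq.add (hL2 j).integrable_sq).div_const 2
  have hint : ∀ i j, Integrable (fun ω => X i ω * X j ω) P := by
    intro i j
    apply Integrable.mono' (hgint i j)
      (((hmeas i).mul (hmeas j)).aestronglyMeasurable)
    filter_upwards with ω
    rw [Real.norm_eq_abs, Pi.mul_apply, abs_mul]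
    nlinarith [sq_nonneg (|X i ω| - |X j ω|), sq_abs (X i ω), sq_abs (X j ω),
      abs_nonneg (X i ω), abs_nonneg (X j ω)]
  have hSsymm : ∀ i j, S j i = S i j := by
    intro i j
    rw [hS, hS]
    congr 1
    funext ω
    ring
  have hfar : ∀ i j, ¬(j = i ∨ G.Adj i j) → S i j = 0 := by
    intro i j hnot
    have hns : ¬ SetsAdj G {i} {j} := by
      rintro ⟨a, ha, b, hb, hab⟩
      simp only [Set.mem_singleton_iff] at ha hb
      subst ha; subst hb
      rcases hab with h | h
      · exact hnot (Or.inl h.symm)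
      · exact hnot (Or.inr h)
    have hind := hdep {i} {j} hns
    have hXij : IndepFun (X i) (X j) P :=
      hind.comp (φ := fun f : ({i} : Set (Fin p)) → ℝ => f ⟨i, rfl⟩)
        (ψ := fun f : ({j} : Set (Fin p)) → ℝ => f ⟨j, rfl⟩)
        (measurable_pi_apply _) (measurable_pi_apply _)
    have hmul := hXij.integral_mul_eq_mul_integral (hmeas i).aestronglyMeasurable
      (hmeas j).aestronglyMeasurable
    rw [hS, show (fun ω => X i ω * X j ω) = fun ω => (X i * X j) ω from rfl]
    rw [show (∫ ω, (X i * X j) ω ∂P) = ∫ ω, (X i * X j) ω ∂P from rfl]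
    calc ∫ ω, (X i * X j) ω ∂P = (∫ ω, X i ω ∂P) * ∫ ω, X j ω ∂P := hmul
      _ = 0 := by rw [h0 i, zero_mul]
  have habs : ∀ i j, |S i j| ≤ (m i + m j) / 2 := by
    intro i j
    rw [hS]
    calc |∫ ω, X i ω * X j ω ∂P| ≤ ∫ ω, |X i ω * X j ω| ∂P := by
          simpa only [Real.norm_eq_abs] using
            norm_integral_le_integral_norm (μ := P) (fun ω => X i ω * X j ω)
      _ ≤ ∫ ω, (X i ω ^ 2 + X j ω ^ 2) / 2 ∂P := by
          apply integral_mono (hint i j).abs (hgint i j)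
          intro ω
          show |X i ω * X j ω| ≤ (X i ω ^ 2 + X j ω ^ 2) / 2
          rw [abs_mul]
          nlinarith [sq_nonneg (|X i ω| - |X j ω|), sq_abs (X i ω), sq_abs (X j ω),
            abs_nonneg (X i ω), abs_nonneg (X j ω)]
      _ = (m i + m j) / 2 := by
          rw [integral_div, integral_add (hL2 i).integrable_sq (hL2 j).integrable_sq]
  have hkey : ∀ i j, S i j ^ 2 ≤ (q i + q j) / 2 := by
    intro i j
    have h1 : S i j ^ 2 ≤ ((m i + m j) / 2) ^ 2 := by
      rw [← sq_abs]
      exact pow_le_pow_left₀ (abs_nonneg _) (habs i j) 2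
    nlinarith [hjensen i, hjensen j, sq_nonneg (m i - m j)]
  have htr : Matrix.trace (S ^ 2) = ∑ i, ∑ j, S i j ^ 2 := by
    rw [sq, Matrix.trace]
    refine Finset.sum_congr rfl fun i _ => ?_
    rw [Matrix.diag_apply, Matrix.mul_apply]
    refine Finset.sum_congr rfl fun j _ => ?_
    rw [hSsymm i j, sq]
  have hcard : ∀ i, (Finset.univ.filter (fun j => j = i ∨ G.Adj i j)).card ≤ Δ + 1 := by
    intro i
    have hfe : Finset.univ.filter (fun j => j = i ∨ G.Adj i j)
        = insert i (G.neighborFinset i) := by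
      ext j
      simp [SimpleGraph.mem_neighborFinset, eq_comm, G.adj_comm]
    rw [hfe, Finset.card_insert_of_notMem (by simp), SimpleGraph.card_neighborFinset_eq_degree]
    have := hΔ i
    omega
  have hrow : ∀ (i : Fin p) (c : ℝ), 0 ≤ c →
      ∑ j, (if j = i ∨ G.Adj i j then c else 0) ≤ ((Δ : ℝ) + 1) * c := by
    intro i c hc
    rw [← Finset.sum_filter, Finset.sum_const, nsmul_eq_mul]
    have := hcard i
    calc ((Finset.univ.filter (fun j => j = i ∨ G.Adj i j)).card : ℝ) * c
        ≤ ((Δ + 1 : ℕ) : ℝ) * c := by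
          apply mul_le_mul_of_nonneg_right _ hc
          exact_mod_cast this
      _ = ((Δ : ℝ) + 1) * c := by push_cast; ring
  rw [htr]
  calc ∑ i, ∑ j, S i j ^ 2
      ≤ ∑ i, ∑ j, (if j = i ∨ G.Adj i j then (q i + q j) / 2 else 0) := by
        refine Finset.sum_le_sum fun i _ => Finset.sum_le_sum fun j _ => ?_
        by_cases h : j = i ∨ G.Adj i j
        · rw [if_pos h]; exact hkey i j
        · rw [if_neg h, hfar i j h]; norm_num
    _ = (∑ i, ∑ j, (if j = i ∨ G.Adj i j then q i / 2 else 0))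
        + ∑ i, ∑ j, (if j = i ∨ G.Adj i j then q j / 2 else 0) := by
        rw [← Finset.sum_add_distrib]
        refine Finset.sum_congr rfl fun i _ => ?_
        rw [← Finset.sum_add_distrib]
        refine Finset.sum_congr rfl fun j _ => ?_
        by_cases h : j = i ∨ G.Adj i j <;> simp [h] <;> ring
    _ ≤ (∑ i, ((Δ : ℝ) + 1) * (q i / 2)) + ∑ j, ((Δ : ℝ) + 1) * (q j / 2) := by
        apply add_le_add
        · exact Finset.sum_le_sum fun i _ => hrow i (q i / 2) (by linarith [hq0 i])
        · rw [Finset.sum_comm]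
          refine Finset.sum_le_sum fun j _ => ?_
          have heqc : ∀ i : Fin p, (if j = i ∨ G.Adj i j then q j / 2 else 0)
              = (if i = j ∨ G.Adj j i then q j / 2 else 0) := by
            intro i
            congr 1
            simp [eq_comm, G.adj_comm]
          rw [Finset.sum_congr rfl fun i _ => heqc i]
          exact hrow j (q j / 2) (by linarith [hq0 j])
    _ = ((Δ : ℝ) + 1) * ∑ i, q i := by
        rw [← Finset.mul_sum, ← Finset.sum_div]
        ring
end

section
/- Let G be a graph on V = {1,…,p} with a d-dominating set 𝒱, let x ∈ ℝ^p, and let A = (a_{ij}) be a symmetric matrix with spectral norm ‖A‖. Define Å by å_{ij} = a_{ij} if i, j ∈ B₂(v) for some v ∈ 𝒱 and å_{ij} = 0 otherwise. Then |xᵀÅx| ≤ (2^d − 1)·‖A‖·xᵀx. -/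
open MeasureTheory ProbabilityTheory Matrix Filter
open scoped BigOperators

open scoped RealInnerProductSpace

lemma quad_bound {p : ℕ} (A : Matrix (Fin p) (Fin p) ℝ) (y : Fin p → ℝ) :
    |y ⬝ᵥ A.mulVec y| ≤ specNorm A * (y ⬝ᵥ y) := by
  set Y : EuclideanSpace ℝ (Fin p) := (WithLp.equiv 2 _).symm y with hY
  have h1 : y ⬝ᵥ A.mulVec y = ⟪Y, Matrix.toEuclideanCLM (𝕜 := ℝ) A Y⟫ := by
    rw [hY, WithLp.equiv_symm_apply, Matrix.toEuclideanCLM_toLp]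
    simp [PiLp.inner_apply, PiLp.toLp_apply, dotProduct, mul_comm]
  have h2 : y ⬝ᵥ y = ‖Y‖ * ‖Y‖ := by
    rw [← real_inner_self_eq_norm_mul_norm]
    simp only [hY, WithLp.equiv_symm_apply, PiLp.inner_apply, PiLp.toLp_apply, dotProduct]
    simp [sq]
  rw [h1, h2]
  calc |⟪Y, Matrix.toEuclideanCLM (𝕜 := ℝ) A Y⟫| ≤ ‖Y‖ * ‖Matrix.toEuclideanCLM (𝕜 := ℝ) A Y‖ :=
        abs_real_inner_le_norm _ _
    _ ≤ ‖Y‖ * (specNorm A * ‖Y‖) := by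
        gcongr; exact (Matrix.toEuclideanCLM (𝕜 := ℝ) A).le_opNorm Y
    _ = specNorm A * (‖Y‖ * ‖Y‖) := by ring

lemma pow_sum_real {α : Type*} [DecidableEq α] (x : Finset α) :
    (∑ m ∈ x.powerset, (-1 : ℝ) ^ m.card) = if x = ∅ then 1 else 0 := by
  have h := Finset.sum_powerset_neg_one_pow_card (x := x)
  have h2 : ((∑ m ∈ x.powerset, (-1 : ℤ) ^ m.card : ℤ) : ℝ)
      = ∑ m ∈ x.powerset, (-1 : ℝ) ^ m.card := by push_cast; ring
  rw [← h2, h]; split <;> simp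

lemma erase_sum_real {α : Type*} [DecidableEq α] (W : Finset α) :
    (∑ m ∈ W.powerset.erase ∅, (-1 : ℝ) ^ (m.card + 1)) = if W.Nonempty then 1 else 0 := by
  have hmem : (∅ : Finset α) ∈ W.powerset := Finset.empty_mem_powerset W
  rw [Finset.sum_erase_eq_sub hmem]
  have : (∑ m ∈ W.powerset, (-1 : ℝ) ^ (m.card + 1))
      = -∑ m ∈ W.powerset, (-1 : ℝ) ^ m.card := by
    rw [← Finset.sum_neg_distrib]
    exact Finset.sum_congr rfl fun m _ => by ring
  rw [this, pow_sum_real]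
  rcases W.eq_empty_or_nonempty with h | h
  · simp [h]
  · simp [h, Finset.nonempty_iff_ne_empty.mp h]

lemma ite_mul_helper (P Q : Prop) [Decidable P] [Decidable Q] (a b c e : ℝ) :
    e * ((if P then a else 0) * (b * (if Q then c else 0)))
      = (e * (if P ∧ Q then (1:ℝ) else 0)) * (a * (b * c)) := by
  split_ifs <;> first | tauto | ring

theorem stmt11 {p d : ℕ} (G : SimpleGraph (Fin p)) (𝒱 : Set (Fin p))
    (h𝒱 : IsDomSet G d 𝒱) (x : Fin p → ℝ) (A Ar : Matrix (Fin p) (Fin p) ℝ)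
    (hA : A.IsSymm)
    (h1 : ∀ i j, (∃ v ∈ 𝒱, G.edist i v ≤ 2 ∧ G.edist j v ≤ 2) → Ar i j = A i j)
    (h2 : ∀ i j, ¬ (∃ v ∈ 𝒱, G.edist i v ≤ 2 ∧ G.edist j v ≤ 2) → Ar i j = 0) :
    |x ⬝ᵥ Ar.mulVec x| ≤ ((2 : ℝ) ^ d - 1) * specNorm A * (x ⬝ᵥ x) := by
  classical
  obtain ⟨-, hd⟩ := h𝒱
  set 𝒱' : Finset (Fin p) := 𝒱.toFinset with h𝒱'
  set Vb : Fin p → Finset (Fin p) :=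
    fun i => 𝒱'.filter (fun v => G.edist i v ≤ 2) with hVb
  have hcard : ∀ i, (Vb i).card ≤ d := by
    intro i
    have h3 : {v ∈ 𝒱 | G.edist i v ≤ 3} = ↑(𝒱'.filter (fun v => G.edist i v ≤ 3)) := by
      ext v; simp [h𝒱', Set.mem_toFinset]
    have hnc := hd i
    rw [h3, Set.ncard_coe_finset] at hnc
    refine le_trans (Finset.card_le_card ?_) hnc
    intro v hv
    simp only [hVb, Finset.mem_filter] at hv ⊢
    exact ⟨hv.1, le_trans hv.2 (by norm_num)⟩
  have hVsub : ∀ i, Vb i ⊆ 𝒱' := fun i => Finset.filter_subset _ _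
  set T : Finset (Finset (Fin p)) := 𝒱'.powerset.erase ∅ with hT
  set y : Finset (Fin p) → Fin p → ℝ := fun S i => if S ⊆ Vb i then x i else 0 with hy
  -- Step A: entrywise description of Ar
  have hAr : ∀ i j, Ar i j = (if ((Vb i) ∩ (Vb j)).Nonempty then (1:ℝ) else 0) * A i j := by
    intro i j
    by_cases h : ∃ v ∈ 𝒱, G.edist i v ≤ 2 ∧ G.edist j v ≤ 2
    · rw [h1 i j h, if_pos, one_mul]
      obtain ⟨v, hv, hvi, hvj⟩ := h
      exact ⟨v, Finset.mem_inter.2 ⟨Finset.mem_filter.2 ⟨Set.mem_toFinset.2 hv, hvi⟩,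
        Finset.mem_filter.2 ⟨Set.mem_toFinset.2 hv, hvj⟩⟩⟩
    · rw [h2 i j h, if_neg, zero_mul]
      rintro ⟨v, hv⟩
      simp only [hVb, h𝒱', Finset.mem_inter, Finset.mem_filter, Set.mem_toFinset] at hv
      exact h ⟨v, hv.1.1, hv.1.2, hv.2.2⟩
  -- filter identity
  have hfil : ∀ i j : Fin p,
      T.filter (fun S => S ⊆ Vb i ∧ S ⊆ Vb j) = ((Vb i ∩ Vb j).powerset).erase ∅ := by
    intro i j
    ext S
    simp only [hT, Finset.mem_filter, Finset.mem_erase, Finset.mem_powerset,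
      Finset.subset_inter_iff]
    constructor
    · rintro ⟨⟨hne, -⟩, hi, hj⟩; exact ⟨hne, hi, hj⟩
    · rintro ⟨hne, hi, hj⟩; exact ⟨⟨hne, hi.trans (hVsub i)⟩, hi, hj⟩
  -- the indicator identity
  have hind : ∀ i j : Fin p,
      (if ((Vb i) ∩ (Vb j)).Nonempty then (1:ℝ) else 0)
        = ∑ S ∈ T, (-1:ℝ) ^ (S.card + 1) * (if S ⊆ Vb i ∧ S ⊆ Vb j then 1 else 0) := by
    intro i j
    have : ∑ S ∈ T, (-1:ℝ) ^ (S.card + 1) * (if S ⊆ Vb i ∧ S ⊆ Vb j then 1 else 0)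
        = ∑ S ∈ T.filter (fun S => S ⊆ Vb i ∧ S ⊆ Vb j), (-1:ℝ) ^ (S.card + 1) := by
      rw [Finset.sum_filter]
      exact Finset.sum_congr rfl fun S _ => by split_ifs <;> ring
    rw [this, hfil, erase_sum_real]
  -- Step B: decomposition identity
  have key : x ⬝ᵥ Ar.mulVec x = ∑ S ∈ T, (-1:ℝ) ^ (S.card + 1) * (y S ⬝ᵥ A.mulVec (y S)) := by
    have expand : ∀ S, y S ⬝ᵥ A.mulVec (y S) = ∑ i, ∑ j, y S i * (A i j * y S j) := by
      intro S
      simp [dotProduct, Matrix.mulVec, Finset.mul_sum]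
    simp only [expand, Finset.mul_sum]
    rw [Finset.sum_comm]
    have lhs_expand : x ⬝ᵥ Ar.mulVec x = ∑ i, ∑ j, x i * (Ar i j * x j) := by
      simp [dotProduct, Matrix.mulVec, Finset.mul_sum]
    rw [lhs_expand]
    refine Finset.sum_congr rfl fun i _ => ?_
    rw [Finset.sum_comm]
    refine Finset.sum_congr rfl fun j _ => ?_
    rw [hAr i j]
    have : ∀ S ∈ T, (-1:ℝ) ^ (S.card + 1) * (y S i * (A i j * y S j))
        = ((-1:ℝ) ^ (S.card + 1) * (if S ⊆ Vb i ∧ S ⊆ Vb j then 1 else 0))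
            * (x i * (A i j * x j)) := by
      intro S _
      simp only [hy]
      exact ite_mul_helper (S ⊆ Vb i) (S ⊆ Vb j) (x i) (A i j) (x j) ((-1:ℝ) ^ (S.card + 1))
    rw [Finset.sum_congr rfl this, ← Finset.sum_mul, ← hind i j]
    split_ifs <;> ring
  -- Step C: bounding
  rw [key]
  have step1 : |∑ S ∈ T, (-1:ℝ) ^ (S.card + 1) * (y S ⬝ᵥ A.mulVec (y S))|
      ≤ ∑ S ∈ T, specNorm A * (y S ⬝ᵥ y S) := by
    refine le_trans (Finset.abs_sum_le_sum_abs _ _) (Finset.sum_le_sum fun S _ => ?_)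
    rw [abs_mul, abs_pow, abs_neg, abs_one, one_pow, one_mul]
    exact quad_bound A (y S)
  refine le_trans step1 ?_
  have hyy : ∀ S, y S ⬝ᵥ y S = ∑ i, if S ⊆ Vb i then x i * x i else 0 := by
    intro S
    simp only [dotProduct, hy]
    refine Finset.sum_congr rfl fun i _ => ?_
    split_ifs <;> ring
  have count : ∀ i : Fin p, (T.filter (fun S => S ⊆ Vb i)).card = 2 ^ (Vb i).card - 1 := by
    intro i
    have : T.filter (fun S => S ⊆ Vb i) = (Vb i).powerset.erase ∅ := by
      ext S
      simp only [hT, Finset.mem_filter, Finset.mem_erase, Finset.mem_powerset]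
      constructor
      · rintro ⟨⟨hne, -⟩, hi⟩; exact ⟨hne, hi⟩
      · rintro ⟨hne, hi⟩; exact ⟨⟨hne, hi.trans (hVsub i)⟩, hi⟩
    rw [this, Finset.card_erase_of_mem (Finset.empty_mem_powerset _), Finset.card_powerset]
  calc ∑ S ∈ T, specNorm A * (y S ⬝ᵥ y S)
      = specNorm A * ∑ i, ∑ S ∈ T, (if S ⊆ Vb i then x i * x i else 0) := by
        rw [← Finset.mul_sum, Finset.sum_comm]
        simp only [hyy]
    _ = specNorm A * ∑ i, ((T.filter (fun S => S ⊆ Vb i)).card : ℝ) * (x i * x i) := by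
        congr 1
        refine Finset.sum_congr rfl fun i _ => ?_
        rw [← Finset.sum_filter, Finset.sum_const, nsmul_eq_mul]
    _ ≤ specNorm A * ∑ i, ((2:ℝ) ^ d - 1) * (x i * x i) := by
        refine mul_le_mul_of_nonneg_left (Finset.sum_le_sum fun i _ => ?_) (norm_nonneg _)
        refine mul_le_mul_of_nonneg_right ?_ (mul_self_nonneg _)
        rw [count i]
        have h1le : 1 ≤ 2 ^ (Vb i).card := Nat.one_le_two_pow
        have : ((2 ^ (Vb i).card - 1 : ℕ) : ℝ) = (2:ℝ) ^ (Vb i).card - 1 := by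
          push_cast [h1le]; ring
        rw [this]
        have : (2:ℝ) ^ (Vb i).card ≤ (2:ℝ) ^ d := by
          exact pow_le_pow_right₀ (by norm_num) (hcard i)
        linarith
    _ = ((2:ℝ) ^ d - 1) * specNorm A * (x ⬝ᵥ x) := by
        rw [← Finset.mul_sum]
        simp only [dotProduct]
        ring
end

section
/- Let G be a graph on V = {1,…,p} with a d-dominating set 𝒱 and maximum degree Δ. Define a graph Γ on vertex set 𝒱 with an edge between u, v ∈ 𝒱 whenever the balls B₂(u) and B₂(v) are adjacent vertex sets in G (some pair of vertices at distance ≤ 1). Then the maximum degree of Γ is at most d³, and consequently Γ admits a proper vertex coloring with at most d³ + 1 colors. -/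
/-- ncard of a bounded bi-union. -/
lemma ncard_biUnion_le' {α β : Type*} [Finite β] {s : Set α} (hs : s.Finite)
    {t : α → Set β} {m : ℕ} (ht : ∀ a ∈ s, (t a).ncard ≤ m) :
    (⋃ a ∈ s, t a).ncard ≤ s.ncard * m := by
  refine Set.Finite.induction_on (motive := fun s _ => (∀ a ∈ s, (t a).ncard ≤ m) →
      (⋃ a ∈ s, t a).ncard ≤ s.ncard * m) s hs (by simp) ?_ ht
  intro a s ha hsf ih ht
  rw [Set.biUnion_insert, Set.ncard_insert_of_notMem ha hsf]
  calc (t a ∪ ⋃ x ∈ s, t x).ncard ≤ (t a).ncard + (⋃ x ∈ s, t x).ncard :=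
        Set.ncard_union_le _ _
    _ ≤ m + s.ncard * m := by
        gcongr
        · exact ht a (Set.mem_insert _ _)
        · exact ih fun b hb => ht b (Set.mem_insert_of_mem _ hb)
    _ = (s.ncard + 1) * m := by ring

/-- Greedy coloring. -/
lemma greedy_colorable {k : ℕ} : ∀ (n : ℕ) (V : Type) [Fintype V] (G : SimpleGraph V),
    Fintype.card V = n → (∀ v, {u | G.Adj v u}.ncard ≤ k) → G.Colorable (k + 1) := by
  intro n
  induction n with
  | zero =>
    intro V _ G hcard _
    have : IsEmpty V := Fintype.card_eq_zero_iff.mp hcard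
    exact ⟨⟨fun v => isEmptyElim v, fun {a} => isEmptyElim a⟩⟩
  | succ n ih =>
    intro V _ G hcard hdeg
    classical
    have : Nonempty V := Fintype.card_pos_iff.mp (by omega)
    obtain ⟨v⟩ := this
    set S : Set V := {u | u ≠ v} with hS
    have hcard' : Fintype.card S = n := by
      have h1 : Fintype.card S = Fintype.card {u : V // ¬ u = v} :=
        Fintype.card_congr (Equiv.subtypeEquivRight fun _ => Iff.rfl)
      rw [h1, Fintype.card_subtype_compl, Fintype.card_subtype_eq, hcard]
      omega
    have hdeg' : ∀ w : S, {u | (G.induce S).Adj w u}.ncard ≤ k := by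
      intro w
      have hinj : Function.Injective (Subtype.val : S → V) := Subtype.coe_injective
      have := Set.ncard_image_of_injective {u | (G.induce S).Adj w u} hinj
      rw [← this]
      refine le_trans (Set.ncard_le_ncard ?_ (Set.toFinite _)) (hdeg ↑w)
      rintro x ⟨u, hu, rfl⟩
      exact hu
    obtain ⟨C⟩ := ih S (G.induce S) hcard' hdeg'
    -- choose a color unused on neighbors of v
    set N : Set S := {u : S | G.Adj v ↑u} with hN
    have hNcard : (C '' N).ncard ≤ k := by
      refine le_trans (Set.ncard_image_le (Set.toFinite _)) ?_
      have hinj : Function.Injective (Subtype.val : S → V) := Subtype.coe_injective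
      rw [← Set.ncard_image_of_injective N hinj]
      refine le_trans (Set.ncard_le_ncard ?_ (Set.toFinite _)) (hdeg v)
      rintro x ⟨u, hu, rfl⟩
      exact hu
    have : ∃ c : Fin (k+1), c ∉ C '' N := by
      by_contra h
      push_neg at h
      have heq : (C '' N) = Set.univ := Set.eq_univ_of_forall h
      rw [heq, Set.ncard_univ, Nat.card_eq_fintype_card, Fintype.card_fin] at hNcard
      omega
    obtain ⟨c, hc⟩ := this
    refine ⟨⟨fun u => if h : u = v then c else C ⟨u, h⟩, ?_⟩⟩
    intro a b hab
    split_ifs with ha hb hb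
    · exact absurd (ha ▸ hb ▸ hab) (G.irrefl)
    · subst ha
      intro hcontra
      exact hc ⟨⟨b, hb⟩, hab, hcontra.symm⟩
    · subst hb
      intro hcontra
      exact hc ⟨⟨a, ha⟩, hab.symm, hcontra⟩
    · exact C.valid (by exact hab : (G.induce S).Adj ⟨a, ha⟩ ⟨b, hb⟩)


open MeasureTheory ProbabilityTheory Matrix Filter
open scoped BigOperators

theorem stmt19 {p d : ℕ} (G : SimpleGraph (Fin p)) (𝒱 : Set (Fin p))
    (h𝒱 : IsDomSet G d 𝒱) (Γ : SimpleGraph 𝒱)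
    (hΓ : ∀ u v : 𝒱, Γ.Adj u v ↔ u ≠ v ∧
      ∃ i j : Fin p, G.edist i ↑u ≤ 2 ∧ G.edist j ↑v ≤ 2 ∧ (i = j ∨ G.Adj i j)) :
    (∀ v : 𝒱, {u | Γ.Adj v u}.ncard ≤ d ^ 3) ∧ Γ.Colorable (d ^ 3 + 1) := by
  classical
  set A : Fin p → Set (Fin p) := fun x => {y ∈ 𝒱 | G.edist x y ≤ 3} with hA
  have hAcard : ∀ x, (A x).ncard ≤ d := h𝒱.2
  -- every vertex has a dominator within distance 1
  have hdom : ∀ x : Fin p, ∃ w ∈ 𝒱, G.edist x w ≤ 1 := by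
    intro x
    by_cases hx : x ∈ 𝒱
    · exact ⟨x, hx, by simp [SimpleGraph.edist_self]⟩
    · obtain ⟨w, hw, hadj⟩ := h𝒱.1 x hx
      exact ⟨w, hw, le_of_eq (SimpleGraph.edist_eq_one_iff_adj.mpr hadj)⟩
  -- the chain claim
  have hchain : ∀ v u : 𝒱, Γ.Adj v u → ∃ w ∈ A ↑v, ∃ r ∈ A w, (↑u : Fin p) ∈ A r := by
    intro v u hadj
    obtain ⟨-, i, j, hi, hj, hij⟩ := (hΓ v u).mp hadj
    have hij1 : G.edist i j ≤ 1 := by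
      rcases hij with rfl | h
      · simp [SimpleGraph.edist_self]
      · exact le_of_eq (SimpleGraph.edist_eq_one_iff_adj.mpr h)
    obtain ⟨w, hw𝒱, hw⟩ := hdom i
    obtain ⟨r, hr𝒱, hr⟩ := hdom j
    have hi' : G.edist (↑v) i ≤ 2 := by rw [SimpleGraph.edist_comm]; exact hi
    have hw' : G.edist w i ≤ 1 := by rw [SimpleGraph.edist_comm]; exact hw
    have hr' : G.edist r j ≤ 1 := by rw [SimpleGraph.edist_comm]; exact hr
    refine ⟨w, ⟨hw𝒱, ?_⟩, r, ⟨hr𝒱, ?_⟩, ⟨u.2, ?_⟩⟩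
    · calc G.edist (↑v) w ≤ G.edist (↑v) i + G.edist i w := SimpleGraph.edist_triangle
        _ ≤ 2 + 1 := by gcongr <;> assumption
        _ = 3 := by norm_num
    · calc G.edist w r ≤ G.edist w i + G.edist i r := SimpleGraph.edist_triangle
        _ ≤ G.edist w i + (G.edist i j + G.edist j r) := by
            gcongr; exact SimpleGraph.edist_triangle
        _ ≤ 1 + (1 + 1) := by gcongr <;> assumption
        _ = 3 := by norm_num
    · calc G.edist r ↑u ≤ G.edist r j + G.edist j ↑u := SimpleGraph.edist_triangle
        _ ≤ 1 + 2 := by gcongr <;> assumption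
        _ = 3 := by norm_num
  have hdeg : ∀ v : 𝒱, {u | Γ.Adj v u}.ncard ≤ d ^ 3 := by
    intro v
    have hsub : Subtype.val '' {u | Γ.Adj v u} ⊆ ⋃ w ∈ A ↑v, ⋃ r ∈ A w, A r := by
      rintro x ⟨u, hu, rfl⟩
      obtain ⟨w, hw, r, hr, hu'⟩ := hchain v u hu
      exact Set.mem_biUnion hw (Set.mem_biUnion hr hu')
    calc {u | Γ.Adj v u}.ncard
        = (Subtype.val '' {u | Γ.Adj v u}).ncard :=
          (Set.ncard_image_of_injective _ Subtype.coe_injective).symm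
      _ ≤ (⋃ w ∈ A ↑v, ⋃ r ∈ A w, A r).ncard :=
          Set.ncard_le_ncard hsub (Set.toFinite _)
      _ ≤ (A ↑v).ncard * (d * d) := by
          refine ncard_biUnion_le' (Set.toFinite _) fun w _ => ?_
          refine le_trans (ncard_biUnion_le' (Set.toFinite _) fun r _ => hAcard r) ?_
          exact Nat.mul_le_mul_right d (hAcard w)
      _ ≤ d * (d * d) := Nat.mul_le_mul_right _ (hAcard ↑v)
      _ = d ^ 3 := by ring
  refine ⟨hdeg, ?_⟩
  have : Fintype ↥𝒱 := Fintype.ofFinite _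
  exact greedy_colorable (Fintype.card ↥𝒱) ↥𝒱 Γ rfl hdeg
end
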